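/- Let d ≥ 1 and ε > 0. The Hessian of ρ_ε is positive semidefinite everywhere: for every z ∈ ℝ^d, ρ_ε is twice differentiable at z, and for every y ∈ ℝ^d the second-order (iterated Fréchet) derivative of ρ_ε at z applied to the pair (y, y) is nonnegative, i.e., ᵗy β_ε(z) y ≥ 0 where β_ε denotes the Hessian of ρ_ε. -/

import Mathlib

set_option synthInstance.maxHeartbeats 1000000
set_option maxHeartbeats 1000000

open Real Set Filter Topology

noncomputable def rhoEps (d : ℕ) (ε : ℝ) (z : EuclideanSpace ℝ (Fin d)) : ℝ :=
  if ε ≤ ‖z‖ then ‖z‖ - (1 - 2 / Real.pi) * ε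
  else (2 * ε / Real.pi) * (1 - Real.cos (Real.pi * ‖z‖ / (2 * ε)))

namespace RhoAux

/-- The 1D profile function. -/
noncomputable def F (ε r : ℝ) : ℝ :=
  if ε ≤ r then r - (1 - 2 / Real.pi) * ε
  else (2 * ε / Real.pi) * (1 - Real.cos (Real.pi * r / (2 * ε)))

/-- Its derivative. -/
noncomputable def phi (ε r : ℝ) : ℝ :=
  if ε ≤ r then 1 else Real.sin (Real.pi * r / (2 * ε))

/-- Its second derivative. -/
noncomputable def psi (ε r : ℝ) : ℝ :=
  if ε ≤ r then 0 else (Real.pi / (2 * ε)) * Real.cos (Real.pi * r / (2 * ε))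

variable {ε : ℝ}

lemma arg_eq (ε r : ℝ) : Real.pi * r / (2 * ε) = (Real.pi / (2 * ε)) * r := by ring

lemma hasDerivAt_cosBranch (hε : 0 < ε) (r : ℝ) :
    HasDerivAt (fun x => (2 * ε / Real.pi) * (1 - Real.cos (Real.pi * x / (2 * ε))))
      (Real.sin (Real.pi * r / (2 * ε))) r := by
  set c : ℝ := Real.pi / (2 * ε) with hc
  have h1 : HasDerivAt (fun x : ℝ => c * x) c r := by
    simpa using (hasDerivAt_id r).const_mul c
  have h2 : HasDerivAt (fun x => Real.cos (c * x)) (-Real.sin (c * r) * c) r :=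
    (Real.hasDerivAt_cos (c * r)).comp r h1
  have h3 := ((hasDerivAt_const r (1 : ℝ)).sub h2).const_mul (2 * ε / Real.pi)
  have harg : ∀ x, Real.pi * x / (2 * ε) = c * x := fun x => arg_eq ε x
  have hfun : (fun x => (2 * ε / Real.pi) * (1 - Real.cos (Real.pi * x / (2 * ε))))
      = fun x => (2 * ε / Real.pi) * ((1 : ℝ) - Real.cos (c * x)) := by
    funext x; rw [harg x]
  rw [hfun, harg r]
  refine h3.congr_deriv ?_
  have hπ : Real.pi ≠ 0 := Real.pi_ne_zero
  have hεne : ε ≠ 0 := ne_of_gt hε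
  rw [hc]; field_simp
  ring

lemma hasDerivAt_sinBranch (hε : 0 < ε) (r : ℝ) :
    HasDerivAt (fun x => Real.sin (Real.pi * x / (2 * ε)))
      ((Real.pi / (2 * ε)) * Real.cos (Real.pi * r / (2 * ε))) r := by
  set c : ℝ := Real.pi / (2 * ε) with hc
  have h1 : HasDerivAt (fun x : ℝ => c * x) c r := by
    simpa using (hasDerivAt_id r).const_mul c
  have h2 : HasDerivAt (fun x => Real.sin (c * x)) (Real.cos (c * r) * c) r :=
    (Real.hasDerivAt_sin (c * r)).comp r h1
  have harg : ∀ x, Real.pi * x / (2 * ε) = c * x := fun x => arg_eq ε x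
  have hfun : (fun x => Real.sin (Real.pi * x / (2 * ε))) = fun x => Real.sin (c * x) := by
    funext x; rw [harg x]
  rw [hfun, harg r]
  convert h2 using 1
  ring

lemma arg_at_eps (hε : 0 < ε) : Real.pi * ε / (2 * ε) = Real.pi / 2 := by
  field_simp

lemma F_eq_cos_on_Iic (hε : 0 < ε) {x : ℝ} (hx : x ≤ ε) :
    F ε x = (2 * ε / Real.pi) * (1 - Real.cos (Real.pi * x / (2 * ε))) := by
  rcases lt_or_eq_of_le hx with h | h
  · rw [F, if_neg (not_le.2 h)]
  · subst h
    rw [F, if_pos le_rfl, arg_at_eps hε, Real.cos_pi_div_two]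
    have hπ : Real.pi ≠ 0 := Real.pi_ne_zero
    field_simp
    ring

lemma phi_eq_sin_on_Iic (hε : 0 < ε) {x : ℝ} (hx : x ≤ ε) :
    phi ε x = Real.sin (Real.pi * x / (2 * ε)) := by
  rcases lt_or_eq_of_le hx with h | h
  · rw [phi, if_neg (not_le.2 h)]
  · subst h
    rw [phi, if_pos le_rfl, arg_at_eps hε, Real.sin_pi_div_two]

lemma hasDerivAt_F (hε : 0 < ε) (r : ℝ) : HasDerivAt (F ε) (phi ε r) r := by
  rcases lt_trichotomy r ε with h | rfl | h
  · have hev : F ε =ᶠ[𝓝 r] fun x => (2 * ε / Real.pi) * (1 - Real.cos (Real.pi * x / (2 * ε))) := by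
      filter_upwards [eventually_lt_nhds h] with x hx
      rw [F, if_neg (not_le.2 hx)]
    rw [phi, if_neg (not_le.2 h)]
    exact (hasDerivAt_cosBranch hε r).congr_of_eventuallyEq hev
  · rw [phi, if_pos le_rfl]
    have hIic : HasDerivWithinAt (F r) 1 (Iic r) r := by
      have h1 := ((hasDerivAt_cosBranch hε r).hasDerivWithinAt (s := Iic r)).congr
        (fun x hx => F_eq_cos_on_Iic hε hx) (F_eq_cos_on_Iic hε le_rfl)
      rwa [arg_at_eps hε, Real.sin_pi_div_two] at h1
    have hIci : HasDerivWithinAt (F r) 1 (Ici r) r := by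
      have h1 : HasDerivAt (fun x : ℝ => x - (1 - 2 / Real.pi) * r) 1 r := by
        simpa using (hasDerivAt_id r).sub_const ((1 - 2 / Real.pi) * r)
      exact (h1.hasDerivWithinAt (s := Ici r)).congr
        (fun x hx => by rw [F, if_pos (mem_Ici.1 hx)]) (by rw [F, if_pos le_rfl])
    have := hIic.union hIci
    rwa [Iic_union_Ici, hasDerivWithinAt_univ] at this
  · have hev : F ε =ᶠ[𝓝 r] fun x => x - (1 - 2 / Real.pi) * ε := by
      filter_upwards [eventually_gt_nhds h] with x hx
      rw [F, if_pos hx.le]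
    rw [phi, if_pos h.le]
    have h1 : HasDerivAt (fun x : ℝ => x - (1 - 2 / Real.pi) * ε) 1 r := by
      simpa using (hasDerivAt_id r).sub_const ((1 - 2 / Real.pi) * ε)
    exact h1.congr_of_eventuallyEq hev

lemma hasDerivAt_phi (hε : 0 < ε) (r : ℝ) : HasDerivAt (phi ε) (psi ε r) r := by
  rcases lt_trichotomy r ε with h | rfl | h
  · have hev : phi ε =ᶠ[𝓝 r] fun x => Real.sin (Real.pi * x / (2 * ε)) := by
      filter_upwards [eventually_lt_nhds h] with x hx
      rw [phi, if_neg (not_le.2 hx)]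
    rw [psi, if_neg (not_le.2 h)]
    exact (hasDerivAt_sinBranch hε r).congr_of_eventuallyEq hev
  · rw [psi, if_pos le_rfl]
    have hIic : HasDerivWithinAt (phi r) 0 (Iic r) r := by
      have h1 := ((hasDerivAt_sinBranch hε r).hasDerivWithinAt (s := Iic r)).congr
        (fun x hx => phi_eq_sin_on_Iic hε hx) (phi_eq_sin_on_Iic hε le_rfl)
      rwa [arg_at_eps hε, Real.cos_pi_div_two, mul_zero] at h1
    have hIci : HasDerivWithinAt (phi r) 0 (Ici r) r := by
      exact ((hasDerivAt_const r (1 : ℝ)).hasDerivWithinAt (s := Ici r)).congr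
        (fun x hx => by rw [phi, if_pos (mem_Ici.1 hx)]) (by rw [phi, if_pos le_rfl])
    have := hIic.union hIci
    rwa [Iic_union_Ici, hasDerivWithinAt_univ] at this
  · have hev : phi ε =ᶠ[𝓝 r] fun _ => (1 : ℝ) := by
      filter_upwards [eventually_gt_nhds h] with x hx
      rw [phi, if_pos hx.le]
    rw [psi, if_pos h.le]
    exact (hasDerivAt_const r (1 : ℝ)).congr_of_eventuallyEq hev

lemma continuous_psi (hε : 0 < ε) : Continuous (psi ε) := by
  have : Continuous fun r : ℝ => if ε ≤ r then (0:ℝ) else (Real.pi / (2 * ε)) * Real.cos (Real.pi * r / (2 * ε)) := by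
    apply Continuous.if_le continuous_const
      (by continuity) continuous_const continuous_id
    rintro x rfl
    rw [arg_at_eps hε, Real.cos_pi_div_two, mul_zero]
  exact this


lemma differentiable_F (hε : 0 < ε) : Differentiable ℝ (F ε) :=
  fun r => (hasDerivAt_F hε r).differentiableAt

lemma deriv_F (hε : 0 < ε) : deriv (F ε) = phi ε := by
  funext r; exact (hasDerivAt_F hε r).deriv

lemma deriv_phi (hε : 0 < ε) : deriv (phi ε) = psi ε := by
  funext r; exact (hasDerivAt_phi hε r).deriv

lemma contDiff_F (hε : 0 < ε) : ContDiff ℝ 2 (F ε) := by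
  rw [show ((2 : WithTop ℕ∞)) = 1 + 1 by norm_num, contDiff_succ_iff_deriv]
  refine ⟨differentiable_F hε, by simp, ?_⟩
  rw [deriv_F hε, contDiff_one_iff_deriv, deriv_phi hε]
  exact ⟨fun r => (hasDerivAt_phi hε r).differentiableAt, continuous_psi hε⟩

lemma phi_nonneg (hε : 0 < ε) {r : ℝ} (hr : 0 ≤ r) : 0 ≤ phi ε r := by
  rw [phi]
  split
  · norm_num
  · rename_i h
    push_neg at h
    apply Real.sin_nonneg_of_nonneg_of_le_pi
    · positivity
    · rw [div_le_iff₀ (by positivity)]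
      nlinarith [Real.pi_pos, h.le]

lemma arg_mem (hε : 0 < ε) {x : ℝ} (hx : 0 ≤ x) (hx' : x ≤ ε) :
    Real.pi * x / (2 * ε) ∈ Icc (-(Real.pi/2)) (Real.pi/2) := by
  have hπ := Real.pi_pos
  constructor
  · have : (0:ℝ) ≤ Real.pi * x / (2 * ε) := by positivity
    linarith
  · rw [div_le_iff₀ (by positivity)]
    nlinarith

lemma phi_monotoneOn (hε : 0 < ε) : MonotoneOn (phi ε) (Ioi 0) := by
  intro x hx y hy hxy
  have hπ := Real.pi_pos
  by_cases hy' : ε ≤ y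
  · rw [phi, phi, if_pos hy']
    split
    · exact le_rfl
    · exact Real.sin_le_one _
  · push_neg at hy'
    have hx' : x < ε := lt_of_le_of_lt hxy hy'
    rw [phi, phi, if_neg (not_le.2 hx'), if_neg (not_le.2 hy')]
    apply Real.strictMonoOn_sin.monotoneOn (arg_mem hε (le_of_lt hx) hx'.le)
      (arg_mem hε (le_of_lt hy) hy'.le)
    have h2ε : (0:ℝ) < 2 * ε := by positivity
    gcongr

lemma convexOn_F (hε : 0 < ε) : ConvexOn ℝ (Ici 0) (F ε) := by
  apply MonotoneOn.convexOn_of_deriv (convex_Ici 0)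
    ((differentiable_F hε).continuous.continuousOn)
    ((differentiable_F hε).differentiableOn)
  rw [interior_Ici, deriv_F hε]
  exact phi_monotoneOn hε

lemma monotoneOn_F (hε : 0 < ε) : MonotoneOn (F ε) (Ici 0) := by
  apply monotoneOn_of_deriv_nonneg (convex_Ici 0)
    ((differentiable_F hε).continuous.continuousOn)
    ((differentiable_F hε).differentiableOn)
  intro x hx
  rw [interior_Ici] at hx
  rw [deriv_F hε]
  exact phi_nonneg hε (le_of_lt hx)


section Euclid

variable {d : ℕ} {ε : ℝ}

local notation "E" => EuclideanSpace ℝ (Fin d)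

lemma rhoEps_eq : rhoEps d ε = (F ε) ∘ (fun z : E => ‖z‖) := rfl

lemma range_norm (hd : 1 ≤ d) : (fun z : E => ‖z‖) '' univ = Ici 0 := by
  apply Subset.antisymm
  · rintro r ⟨z, -, rfl⟩
    exact norm_nonneg z
  · rintro r (hr : 0 ≤ r)
    refine ⟨r • EuclideanSpace.single (⟨0, hd⟩ : Fin d) (1:ℝ), mem_univ _, ?_⟩
    simp [norm_smul, EuclideanSpace.norm_single, abs_of_nonneg hr]

lemma convexOn_rhoEps (hd : 1 ≤ d) (hε : 0 < ε) : ConvexOn ℝ univ (rhoEps d ε) := by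
  rw [rhoEps_eq]
  refine ConvexOn.comp ?_ convexOn_univ_norm ?_
  · rw [range_norm hd]; exact convexOn_F hε
  · rw [range_norm hd]; exact monotoneOn_F hε

lemma contDiffAt_rhoEps (hε : 0 < ε) {z : E} (hz : z ≠ 0) :
    ContDiffAt ℝ 2 (rhoEps d ε) z := by
  rw [rhoEps_eq]
  exact (contDiff_F hε).contDiffAt.comp z (contDiffAt_norm ℝ hz)

/-- abstract: C² + convex ⇒ second derivative nonneg in direction y. -/
lemma psd_of_contDiffAt_convexOn {ρ : E → ℝ} {z : E}
    (hC2 : ContDiffAt ℝ 2 ρ z) (hconv : ConvexOn ℝ univ ρ) (y : E) :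
    0 ≤ fderiv ℝ (fderiv ℝ ρ) z y y := by
  -- eventual differentiability
  have hev : ∀ᶠ x in 𝓝 z, DifferentiableAt ℝ ρ x := by
    filter_upwards [hC2.eventually (by norm_num)] with x hx
    exact hx.differentiableAt two_ne_zero
  have hd' : DifferentiableAt ℝ (fderiv ℝ ρ) z :=
    (hC2.fderiv_right (by norm_num : (1 : WithTop ℕ∞) + 1 ≤ 2)).differentiableAt one_ne_zero
  set L := fderiv ℝ (fderiv ℝ ρ) z with hL
  set ℓ : ℝ → E := fun t => z + t • y with hℓdef
  have hℓ0 : ℓ 0 = z := by simp [hℓdef]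
  have hℓ : ∀ t : ℝ, HasDerivAt ℓ y t := by
    intro t
    simpa [hℓdef] using (((hasDerivAt_id t).smul_const y).const_add z)
  set g : ℝ → ℝ := fun t => ρ (ℓ t) with hgdef
  set dfun : ℝ → ℝ := fun t => fderiv ℝ ρ (ℓ t) y with hdfun
  -- convexity of g
  have hgconv : ConvexOn ℝ univ g := by
    have hA := hconv.comp_affineMap (AffineMap.lineMap z (z + y) : ℝ →ᵃ[ℝ] E)
    have : (ρ ∘ (AffineMap.lineMap z (z + y) : ℝ →ᵃ[ℝ] E)) = g := by
      funext t
      simp [hgdef, hℓdef, AffineMap.lineMap_apply, add_comm]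
    rw [this] at hA
    simpa using hA
  -- derivative of d at 0
  have hd0 : HasDerivAt dfun (L y y) 0 := by
    have h1 : HasDerivAt (fun t => fderiv ℝ ρ (ℓ t)) (L y) 0 := by
      have h0 := hd'.hasFDerivAt
      rw [← hℓ0] at h0
      have := h0.comp_hasDerivAt 0 (hℓ 0)
      rw [hℓ0] at this
      exact this
    have h2 := (ContinuousLinearMap.apply ℝ ℝ y).hasFDerivAt.comp_hasDerivAt 0 h1
    exact h2
  -- eventually g has derivative dfun
  have hgd : ∀ᶠ t in 𝓝 (0:ℝ), HasDerivAt g (dfun t) t := by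
    have hcont : ContinuousAt ℓ 0 := (hℓ 0).continuousAt
    have : ∀ᶠ t in 𝓝 (0:ℝ), DifferentiableAt ℝ ρ (ℓ t) := by
      have := hcont.preimage_mem_nhds (by rw [hℓ0] at *; exact hev)
      exact eventually_of_mem this (fun t ht => ht)
    filter_upwards [this] with t ht
    exact ht.hasFDerivAt.comp_hasDerivAt t (hℓ t)
  obtain ⟨δ, hδ, hball⟩ := Metric.eventually_nhds_iff.1 hgd
  -- monotonicity of dfun near 0 (from convexity)
  have hmono : ∀ t : ℝ, 0 < t → t < δ → dfun 0 ≤ dfun t := by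
    intro t ht htδ
    have h0 : HasDerivAt g (dfun 0) 0 := hball (by simpa using hδ)
    have htt : HasDerivAt g (dfun t) t := hball (by simpa [abs_of_pos ht] using htδ)
    have h1 := hgconv.le_slope_of_hasDerivAt (mem_univ 0) (mem_univ t) ht h0
    have h2 := hgconv.slope_le_of_hasDerivAt (mem_univ 0) (mem_univ t) ht htt
    linarith
  -- limit of slopes
  have hslope : Tendsto (slope dfun 0) (𝓝[>] 0) (𝓝 (L y y)) :=
    (hasDerivAt_iff_tendsto_slope.1 hd0).mono_left
      (nhdsWithin_mono 0 (fun x hx => ne_of_gt hx))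
  refine ge_of_tendsto hslope ?_
  filter_upwards [Ioo_mem_nhdsGT_of_mem ⟨le_rfl, hδ⟩] with t ht
  rw [slope_def_field]
  have := hmono t ht.1 ht.2
  have h0t : (0:ℝ) < t := ht.1
  have : (0:ℝ) ≤ (dfun t - dfun 0) / (t - 0) := by
    apply div_nonneg (by linarith) (by linarith)
  simpa [div_eq_mul_inv] using this


open scoped RealInnerProductSpace

lemma one_sub_cos_le_sq (x : ℝ) : 1 - Real.cos x ≤ x ^ 2 / 2 := by
  have h1 : Real.sin (x/2) ^ 2 = 1/2 - Real.cos (2 * (x/2)) / 2 := Real.sin_sq_eq_half_sub _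
  have h2 : Real.sin (x/2) ^ 2 ≤ (x/2) ^ 2 := Real.sin_sq_le_sq
  have h3 : (2 : ℝ) * (x/2) = x := by ring
  rw [h3] at h1
  nlinarith

lemma abs_sin_sub_le_cube {x : ℝ} (h0 : 0 ≤ x) (h1 : x ≤ 1) : |Real.sin x - x| ≤ x ^ 3 := by
  rcases eq_or_lt_of_le h0 with rfl | hx
  · simp
  · have hub : Real.sin x ≤ x := Real.sin_le h0
    have hlb : x - x ^ 3 / 4 < Real.sin x := by
      have := Real.sin_gt_sub_cube hx; nlinarith [pow_pos hx 3]
    rw [abs_sub_comm, abs_of_nonneg (by linarith)]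
    nlinarith [pow_pos hx 3]

lemma rhoEps_zero (hε : 0 < ε) : rhoEps d ε (0 : E) = 0 := by
  rw [rhoEps]
  simp [not_le.2 hε, hε.not_ge]

lemma hasFDerivAt_rhoEps_zero (hε : 0 < ε) :
    HasFDerivAt (rhoEps d ε) (0 : E →L[ℝ] ℝ) (0 : E) := by
  rw [hasFDerivAt_iff_isLittleO_nhds_zero]
  rw [Asymptotics.isLittleO_iff]
  intro C hC
  have hπ := Real.pi_pos
  have hc : (0:ℝ) < Real.pi / (2*ε) := by positivity
  set c := Real.pi / (2*ε) with hcdef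
  have hδ : (0:ℝ) < min ε (C / (ε * c ^ 2)) := lt_min hε (by positivity)
  rw [Metric.eventually_nhds_iff]
  refine ⟨min ε (C / (ε * c ^ 2)), hδ, ?_⟩
  intro w hw
  rw [dist_zero_right] at hw
  have hwε : ‖w‖ < ε := lt_of_lt_of_le hw (min_le_left _ _)
  have hw2 : ‖w‖ ≤ C / (ε * c ^ 2) := (lt_of_lt_of_le hw (min_le_right _ _)).le
  simp only [zero_add, rhoEps_zero hε, sub_zero, ContinuousLinearMap.zero_apply]
  rw [rhoEps, if_neg (not_le.2 hwε)]
  have harg : Real.pi * ‖w‖ / (2 * ε) = c * ‖w‖ := arg_eq ε ‖w‖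
  rw [harg]
  have hcos : 1 - Real.cos (c * ‖w‖) ≤ (c * ‖w‖)^2 / 2 := one_sub_cos_le_sq _
  have hcos0 : 0 ≤ 1 - Real.cos (c * ‖w‖) := by
    have := Real.cos_le_one (c * ‖w‖); linarith
  rw [Real.norm_eq_abs, abs_of_nonneg (by positivity)]
  have hkey : 2 * ε / Real.pi * (1 - Real.cos (c * ‖w‖)) ≤ (2*ε/Real.pi) * ((c * ‖w‖)^2/2) := by
    apply mul_le_mul_of_nonneg_left hcos (by positivity)
  have hsimp : (2*ε/Real.pi) * ((c * ‖w‖)^2/2) = (ε * c ^ 2 / Real.pi) * ‖w‖ ^ 2 := by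
    rw [hcdef]; field_simp
  have hfin : (ε * c ^ 2 / Real.pi) * ‖w‖ ^ 2 ≤ C * ‖w‖ := by
    have h1 : (ε * c ^ 2 / Real.pi) * ‖w‖ ≤ ε * c ^ 2 * ‖w‖ := by
      apply mul_le_mul_of_nonneg_right _ (norm_nonneg w)
      rw [div_le_iff₀ hπ]
      nlinarith [Real.pi_gt_three, sq_nonneg c, mul_pos hε (mul_pos (mul_pos hc hc) hε)]
    have h2 : ε * c ^ 2 * ‖w‖ ≤ C := by
      rw [← le_div_iff₀' (by positivity)]
      exact hw2
    calc (ε * c ^ 2 / Real.pi) * ‖w‖ ^ 2 = ((ε * c ^ 2 / Real.pi) * ‖w‖) * ‖w‖ := by ring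
    _ ≤ (ε * c ^ 2 * ‖w‖) * ‖w‖ := by
        apply mul_le_mul_of_nonneg_right h1 (norm_nonneg w)
    _ ≤ C * ‖w‖ := by
        apply mul_le_mul_of_nonneg_right h2 (norm_nonneg w)
  calc 2 * ε / Real.pi * (1 - Real.cos (c * ‖w‖)) ≤ (ε * c ^ 2 / Real.pi) * ‖w‖ ^ 2 := by
        rw [← hsimp]; exact hkey
  _ ≤ C * ‖w‖ := hfin

lemma hasFDerivAt_norm {z : E} (hz : z ≠ 0) :
    HasFDerivAt (fun w : E => ‖w‖) (‖z‖⁻¹ • innerSL ℝ z) z := by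
  have hzn : ‖z‖ ≠ 0 := norm_ne_zero_iff.2 hz
  have hz2 : ⟪z, z⟫ ≠ 0 := by
    rw [real_inner_self_eq_norm_sq]
    positivity
  have h1 := (hasFDerivAt_id z).inner ℝ (hasFDerivAt_id z)
  have h2 : HasFDerivAt (fun w : E => ⟪w, w⟫) ((2:ℝ) • innerSL ℝ z) z := by
    refine h1.congr_fderiv ?_
    symm
    ext y
    simp only [ContinuousLinearMap.smul_apply, innerSL_apply_apply, ContinuousLinearMap.coe_comp',
      Function.comp_apply, ContinuousLinearMap.prod_apply, ContinuousLinearMap.coe_id', id_eq,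
      fderivInnerCLM_apply, id]
    rw [real_inner_comm y z]
    rw [smul_eq_mul]
    ring
  have hsq := (Real.hasDerivAt_sqrt hz2).comp_hasFDerivAt_of_eq z h2 rfl
  have hfun : (fun w : E => Real.sqrt ⟪w, w⟫) = fun w : E => ‖w‖ := by
    funext w
    rw [real_inner_self_eq_norm_sq, Real.sqrt_sq (norm_nonneg w)]
  rw [show Function.comp Real.sqrt (fun w : E => ⟪w, w⟫) = fun w : E => Real.sqrt ⟪w, w⟫ from rfl] at hsq
  rw [hfun] at hsq
  refine hsq.congr_fderiv ?_
  symm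
  rw [smul_smul, real_inner_self_eq_norm_sq, Real.sqrt_sq (norm_nonneg z)]
  congr 1
  field_simp


/-- The candidate derivative field of `rhoEps` near `0`. -/
noncomputable def Dmap (d : ℕ) (ε : ℝ) : E → (E →L[ℝ] ℝ) :=
  fun w => (Real.sin (Real.pi * ‖w‖ / (2 * ε)) / ‖w‖) • innerSL ℝ w

lemma Dmap_zero : Dmap d ε (0 : E) = 0 := by
  rw [Dmap]
  simp

lemma hasFDerivAt_rhoEps_ne_zero (hε : 0 < ε) {z : E} (hz : z ≠ 0) :
    HasFDerivAt (rhoEps d ε) ((phi ε ‖z‖ / ‖z‖) • innerSL ℝ z) z := by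
  have hzn : ‖z‖ ≠ 0 := norm_ne_zero_iff.2 hz
  have h := (hasDerivAt_F hε ‖z‖).comp_hasFDerivAt z (hasFDerivAt_norm hz)
  rw [rhoEps_eq]
  refine h.congr_fderiv ?_
  symm
  rw [smul_smul, div_eq_mul_inv]

lemma fderiv_rhoEps_eq_Dmap (hε : 0 < ε) {w : E} (hw : ‖w‖ < ε) :
    fderiv ℝ (rhoEps d ε) w = Dmap d ε w := by
  by_cases hw0 : w = 0
  · subst hw0
    rw [(hasFDerivAt_rhoEps_zero hε).fderiv, Dmap_zero]
  · rw [(hasFDerivAt_rhoEps_ne_zero hε hw0).fderiv, Dmap, phi, if_neg (not_le.2 hw)]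

lemma hasFDerivAt_Dmap_zero (hε : 0 < ε) :
    HasFDerivAt (Dmap d ε)
      ((Real.pi / (2 * ε)) • (innerSL ℝ : E →L[ℝ] E →L[ℝ] ℝ)) (0 : E) := by
  have hπ := Real.pi_pos
  set c := Real.pi / (2 * ε) with hcdef
  have hc : (0:ℝ) < c := by positivity
  rw [hasFDerivAt_iff_isLittleO_nhds_zero, Asymptotics.isLittleO_iff]
  intro C hC
  have hδ : (0:ℝ) < min c⁻¹ (Real.sqrt (C / c ^ 3)) := lt_min (by positivity) (by positivity)
  rw [Metric.eventually_nhds_iff]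
  refine ⟨_, hδ, ?_⟩
  intro w hw
  rw [dist_zero_right] at hw
  have hw1 : ‖w‖ < c⁻¹ := lt_of_lt_of_le hw (min_le_left _ _)
  have hw2 : ‖w‖ < Real.sqrt (C / c ^ 3) := lt_of_lt_of_le hw (min_le_right _ _)
  have hw2' : ‖w‖ ^ 2 < C / c ^ 3 := by
    have := Real.sq_sqrt (le_of_lt (show (0:ℝ) < C / c^3 by positivity))
    nlinarith [norm_nonneg w, Real.sqrt_nonneg (C / c ^ 3)]
  simp only [zero_add]
  rw [Dmap_zero, sub_zero]
  by_cases hw0 : w = 0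
  · subst hw0
    simp [Dmap_zero]
  · set r := ‖w‖ with hrdef
    have hr : (0:ℝ) < r := norm_pos_iff.2 hw0
    have harg : Real.pi * ‖w‖ / (2 * ε) = c * r := arg_eq ε ‖w‖
    have hBw : ((c • (innerSL ℝ : E →L[ℝ] E →L[ℝ] ℝ)) w) = c • innerSL ℝ w := rfl
    have hdiff : Dmap d ε w - (c • (innerSL ℝ : E →L[ℝ] E →L[ℝ] ℝ)) w
        = (Real.sin (c * r) / r - c) • innerSL ℝ w := by
      rw [Dmap, harg, hBw, ← hrdef]; exact (sub_smul _ _ _).symm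
    rw [hdiff]
    have hnorm : ‖(Real.sin (c * r) / r - c) • innerSL ℝ w‖
        = |Real.sin (c * r) / r - c| * r := by
      have h0 := norm_smul (Real.sin (c * r) / r - c) (innerSL ℝ w)
      rw [innerSL_apply_norm, Real.norm_eq_abs, ← hrdef] at h0
      exact h0
    rw [hnorm]
    have hfrac : Real.sin (c * r) / r - c = (Real.sin (c * r) - c * r) / r := by
      field_simp
    rw [hfrac, abs_div, abs_of_pos hr, div_mul_cancel₀ _ (ne_of_gt hr)]
    have hcr0 : 0 ≤ c * r := by positivity
    have hcr1 : c * r ≤ 1 := by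
      calc c * r ≤ c * c⁻¹ := by apply mul_le_mul_of_nonneg_left hw1.le hc.le
      _ = 1 := mul_inv_cancel₀ (ne_of_gt hc)
    have hbound := abs_sin_sub_le_cube hcr0 hcr1
    calc |Real.sin (c * r) - c * r| ≤ (c * r) ^ 3 := hbound
    _ = (c ^ 3 * r ^ 2) * r := by ring
    _ ≤ C * r := by
        apply mul_le_mul_of_nonneg_right _ hr.le
        rw [lt_div_iff₀ (by positivity)] at hw2'
        nlinarith
  
end Euclid

end RhoAux

open RhoAux in
/-- the Hessian of `ρ_ε` is positive semidefinite everywhere: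
`ρ_ε` is twice differentiable at every `z`, and the second-order (iterated Fréchet)
derivative of `ρ_ε` at `z` applied to `(y, y)` is nonnegative for every `y`. -/
theorem rhoEps_hessian_posSemidef (d : ℕ) (hd : 1 ≤ d) (ε : ℝ) (hε : 0 < ε)
    (z : EuclideanSpace ℝ (Fin d)) :
    DifferentiableAt ℝ (rhoEps d ε) z ∧
      DifferentiableAt ℝ (fderiv ℝ (rhoEps d ε)) z ∧
      ∀ y : EuclideanSpace ℝ (Fin d),
        0 ≤ fderiv ℝ (fderiv ℝ (rhoEps d ε)) z y y := by
  by_cases hz : z = 0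
  · subst hz
    have hA := hasFDerivAt_rhoEps_zero (d := d) hε
    have hev : fderiv ℝ (rhoEps d ε) =ᶠ[𝓝 (0 : EuclideanSpace ℝ (Fin d))] Dmap d ε := by
      filter_upwards [Metric.ball_mem_nhds (0 : EuclideanSpace ℝ (Fin d)) hε] with w hw
      rw [mem_ball_zero_iff] at hw
      exact fderiv_rhoEps_eq_Dmap hε hw
    have hB := (hasFDerivAt_Dmap_zero (d := d) hε).congr_of_eventuallyEq hev
    refine ⟨hA.differentiableAt, hB.differentiableAt, ?_⟩
    intro y
    rw [hB.fderiv]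
    simp only [ContinuousLinearMap.smul_apply, innerSL_apply_apply, smul_eq_mul]
    have h1 : (0:ℝ) ≤ inner ℝ y y := real_inner_self_nonneg
    have hπ := Real.pi_pos
    apply mul_nonneg (by positivity) h1
  · have hC2 := contDiffAt_rhoEps hε hz
    refine ⟨hC2.differentiableAt two_ne_zero,
      (hC2.fderiv_right (by norm_num : (1 : WithTop ℕ∞) + 1 ≤ 2)).differentiableAt one_ne_zero, ?_⟩
    intro y
    exact psd_of_contDiffAt_convexOn hC2 (convexOn_rhoEps hd hε) y
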